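/- Let f : ℝ → ℝ be continuous on [0,M], let h be the greatest convex minorant of f on [0,M], and suppose h(u₀) < f(u₀) for some u₀ ∈ (0,M). Then h is affine on a neighborhood of u₀ within (0,M); i.e., wherever the convex envelope lies strictly below f in the interior, it is locally linear. -/

import Mathlib

/-- Where the greatest convex minorant of a continuous f lies strictly below f in the
interior, it is locally affine. -/
theorem envelope_locally_affine (f h : ℝ → ℝ) (M : ℝ) (hM : 0 < M)
    (hf : ContinuousOn f (Set.Icc 0 M))
    (hconv : ConvexOn ℝ (Set.Icc 0 M) h)
    (hle : ∀ u ∈ Set.Icc 0 M, h u ≤ f u)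
    (hgreatest : ∀ g : ℝ → ℝ, ConvexOn ℝ (Set.Icc 0 M) g →
      (∀ x ∈ Set.Icc 0 M, g x ≤ f x) → ∀ u ∈ Set.Icc 0 M, g u ≤ h u)
    (u₀ : ℝ) (hu₀ : u₀ ∈ Set.Ioo 0 M) (hstrict : h u₀ < f u₀) :
    ∃ ε > 0, Set.Icc (u₀ - ε) (u₀ + ε) ⊆ Set.Ioo 0 M ∧
      ∃ c d : ℝ, ∀ u ∈ Set.Icc (u₀ - ε) (u₀ + ε), h u = c * u + d := by
  have hIooIcc : Set.Ioo (0:ℝ) M ⊆ Set.Icc 0 M := Set.Ioo_subset_Icc_self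
  set δ : ℝ := (f u₀ - h u₀) / 2 with hδdef
  have hδ : 0 < δ := by simp [hδdef]; linarith
  -- continuity of h on the open interval
  have hconvIoo : ConvexOn ℝ (Set.Ioo 0 M) h := hconv.subset hIooIcc (convex_Ioo 0 M)
  have hhcont : ContinuousOn h (Set.Ioo 0 M) := hconvIoo.continuousOn isOpen_Ioo
  have hhC : ContinuousAt h u₀ :=
    (hhcont u₀ hu₀).continuousAt (isOpen_Ioo.mem_nhds hu₀)
  have hfC : ContinuousWithinAt f (Set.Icc 0 M) u₀ := hf u₀ (hIooIcc hu₀)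
  have hfC' : ContinuousAt f u₀ := by
    rw [ContinuousWithinAt] at hfC
    rw [ContinuousAt, ← nhdsWithin_eq_nhds.2]
    exact hfC
    exact Filter.mem_of_superset (isOpen_Ioo.mem_nhds hu₀) hIooIcc
  -- find a good neighborhood
  have hev : ∀ᶠ u in nhds u₀, u ∈ Set.Ioo 0 M ∧ f u₀ - δ < f u ∧ h u < h u₀ + δ := by
    filter_upwards [isOpen_Ioo.mem_nhds hu₀,
      hfC' (Ioi_mem_nhds (by linarith : f u₀ - δ < f u₀)),
      hhC (Iio_mem_nhds (by linarith : h u₀ < h u₀ + δ))] with u h1 h2 h3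
    exact ⟨h1, h2, h3⟩
  obtain ⟨ε₀, hε₀, hball⟩ := Metric.eventually_nhds_iff.1 hev
  set ε : ℝ := ε₀ / 2 with hεdef
  have hεpos : 0 < ε := by positivity
  set a : ℝ := u₀ - ε with hadef
  set b : ℝ := u₀ + ε with hbdef
  have hmem : ∀ u ∈ Set.Icc a b, u ∈ Set.Ioo 0 M ∧ f u₀ - δ < f u ∧ h u < h u₀ + δ := by
    intro u hu
    apply hball
    rw [Real.dist_eq, abs_lt]
    simp only [Set.mem_Icc, hadef, hbdef] at hu
    constructor <;> [linarith [hu.1]; linarith [hu.2]]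
  have hab : a < b := by simp [hadef, hbdef]; linarith
  have haI : a ∈ Set.Ioo 0 M := (hmem a ⟨le_refl a, hab.le⟩).1
  have hbI : b ∈ Set.Ioo 0 M := (hmem b ⟨hab.le, le_refl b⟩).1
  set c : ℝ := (h b - h a) / (b - a) with hcdef
  set L : ℝ → ℝ := fun u => c * (u - a) + h a with hLdef
  have hLa : L a = h a := by simp [hLdef]
  have hba : b - a ≠ 0 := by intro hc; simp [hadef, hbdef] at hc; linarith
  have hLb : L b = h b := by
    simp only [hLdef, hcdef]
    field_simp
    ring
  -- L is convex (affine)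
  have hLconv : ConvexOn ℝ (Set.Icc 0 M) L := by
    refine ⟨convex_Icc 0 M, ?_⟩
    intro x _ y _ p q hp hq hpq
    simp only [hLdef, smul_eq_mul]
    apply le_of_eq
    have : q = 1 - p := by linarith
    subst this; ring
  -- L ≤ h outside [a,b] via slope monotonicity
  have hLle_out : ∀ u ∈ Set.Icc 0 M, u ∉ Set.Icc a b → L u ≤ h u := by
    intro u hu hnot
    simp only [Set.mem_Icc, not_and_or, not_le] at hnot
    rcases hnot with hua | hub
    · -- u < a < b
      have hslope := hconv.slope_mono_adjacent hu (hIooIcc hbI) hua hab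
      have h1 : 0 < a - u := by linarith
      have h2 : 0 < b - a := by linarith
      rw [div_le_div_iff₀ (by linarith) h2] at hslope
      simp only [hLdef, hcdef]
      rw [div_mul_eq_mul_div, ← le_sub_iff_add_le, div_le_iff₀ h2]
      nlinarith
    · -- a < b < u
      have hslope := hconv.slope_mono_adjacent (hIooIcc haI) hu hab hub
      have h1 : 0 < u - b := by linarith
      have h2 : 0 < b - a := by linarith
      rw [div_le_div_iff₀ h2 h1] at hslope
      simp only [hLdef, hcdef]
      rw [div_mul_eq_mul_div, ← le_sub_iff_add_le, div_le_iff₀ h2]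
      nlinarith
  -- h ≤ L on [a,b] by convexity (chord above graph)
  have hhleL : ∀ u ∈ Set.Icc a b, h u ≤ L u := by
    intro u hu
    simp only [Set.mem_Icc] at hu
    have h2 : 0 < b - a := by linarith
    set p : ℝ := (b - u) / (b - a) with hpdef
    set q : ℝ := (u - a) / (b - a) with hqdef
    have hp : 0 ≤ p := div_nonneg (by linarith [hu.2]) h2.le
    have hq : 0 ≤ q := div_nonneg (by linarith [hu.1]) h2.le
    have hpq : p + q = 1 := by rw [hpdef, hqdef, ← add_div, div_eq_one_iff_eq hba]; ring
    have hcomb : p • a + q • b = u := by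
      simp only [smul_eq_mul, hpdef, hqdef]; field_simp; ring
    have := hconv.2 (hIooIcc haI) (hIooIcc hbI) hp hq hpq
    rw [hcomb] at this
    refine this.trans (le_of_eq ?_)
    simp only [smul_eq_mul, hLdef, hcdef, hpdef, hqdef]
    field_simp
    ring
  -- L ≤ f on [a,b]
  have hLlef : ∀ u ∈ Set.Icc a b, L u ≤ f u := by
    intro u hu
    obtain ⟨_, hfu, _⟩ := hmem u hu
    have hLmax : L u ≤ max (h a) (h b) := by
      simp only [Set.mem_Icc] at hu
      rcases le_or_gt 0 c with hc | hc
      · calc L u ≤ L b := by simp only [hLdef]; nlinarith [hu.2]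
          _ = h b := hLb
          _ ≤ max (h a) (h b) := le_max_right _ _
      · calc L u ≤ L a := by simp only [hLdef]; nlinarith [hu.1]
          _ = h a := hLa
          _ ≤ max (h a) (h b) := le_max_left _ _
    have hha := (hmem a ⟨le_refl a, hab.le⟩).2.2
    have hhb := (hmem b ⟨hab.le, le_refl b⟩).2.2
    have : max (h a) (h b) < h u₀ + δ := max_lt hha hhb
    have : f u₀ - δ = h u₀ + δ := by simp [hδdef]; ring
    refine le_of_lt ?_
    calc L u ≤ max (h a) (h b) := hLmax
      _ < h u₀ + δ := max_lt hha hhb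
      _ = f u₀ - δ := this.symm
      _ < f u := hfu
  -- the glued function g = max h L
  set g : ℝ → ℝ := fun u => max (h u) (L u) with hgdef
  have hgconv : ConvexOn ℝ (Set.Icc 0 M) g := hconv.sup hLconv
  have hglef : ∀ x ∈ Set.Icc 0 M, g x ≤ f x := by
    intro x hx
    by_cases hxab : x ∈ Set.Icc a b
    · exact max_le (hle x hx) (hLlef x hxab)
    · simp only [hgdef]
      rw [max_eq_left (hLle_out x hx hxab)]
      exact hle x hx
  have hgle : ∀ u ∈ Set.Icc 0 M, g u ≤ h u := hgreatest g hgconv hglef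
  -- conclude h = L on [a,b]
  refine ⟨ε, hεpos, ?_, c, h a - c * a, ?_⟩
  · intro u hu; exact (hmem u hu).1
  · intro u hu
    have h1 : h u ≤ L u := hhleL u hu
    have h2 : L u ≤ h u := le_trans (le_max_right _ _) (hgle u (hIooIcc (hmem u hu).1))
    have : h u = L u := le_antisymm h1 h2
    rw [this]; simp only [hLdef]; ring
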